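/- For every a > 0 and every z ∈ ℝ, the Laplace density satisfies the scale-mixture-of-normals identity (a/2) · exp(−a|z|) = ∫_0^∞ (2πs)^{−1/2} exp(−z²/(2s)) · (a²/2) exp(−a² s / 2) ds, where the mixing density (a²/2)exp(−a² s/2) is the exponential density with rate a²/2. -/

import Mathlib

open MeasureTheory Real Set

lemma image_u (sq sp : ℝ) (hq : 0 < sq) (hp : 0 < sp) :
    (fun t : ℝ => sq * t - sp / t) '' Set.Ioi 0 = Set.univ := by
  ext y
  simp only [mem_image, mem_univ, iff_true, mem_Ioi]
  have hd : 0 < y^2 + 4*sp*sq := by positivity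
  set t := (y + Real.sqrt (y^2 + 4*sp*sq)) / (2*sq) with ht
  have hs : |y| < Real.sqrt (y^2 + 4*sp*sq) := by
    have : |y| = Real.sqrt (y^2) := by rw [Real.sqrt_sq_eq_abs]
    rw [this]
    apply Real.sqrt_lt_sqrt (sq_nonneg y)
    nlinarith
  have htpos : 0 < t := by
    apply div_pos _ (by positivity)
    have := neg_abs_le y
    linarith
  refine ⟨t, htpos, ?_⟩
  have hsq : Real.sqrt (y^2 + 4*sp*sq) ^ 2 = y^2 + 4*sp*sq := Real.sq_sqrt hd.le
  have key : sq * t^2 - y * t - sp = 0 := by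
    have h2 : 2*sq*t = y + Real.sqrt (y^2+4*sp*sq) := by
      rw [ht]; field_simp
    have h3 : (2*sq*t - y)^2 = y^2 + 4*sp*sq := by
      rw [show 2*sq*t - y = Real.sqrt (y^2+4*sp*sq) by linarith]
      exact hsq
    have h4 : sq * (sq*t^2 - y*t - sp) = 0 := by nlinarith [h3]
    have := mul_eq_zero.mp h4
    rcases this with h|h
    · exact absurd h hq.ne'
    · linarith
  field_simp
  nlinarith [key]

lemma glasser {p q : ℝ} (hp : 0 < p) (hq : 0 < q) :
    ∫ t in Set.Ioi (0:ℝ), Real.exp (-(q*t^2) - p/t^2)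
      = Real.sqrt (π/q)/2 * Real.exp (-(2*Real.sqrt (p*q))) := by
  set sq := Real.sqrt q with hsqdef
  set sp := Real.sqrt p with hspdef
  have hsq : 0 < sq := Real.sqrt_pos.mpr hq
  have hsp : 0 < sp := Real.sqrt_pos.mpr hp
  have hq2 : sq^2 = q := Real.sq_sqrt hq.le
  have hp2 : sp^2 = p := Real.sq_sqrt hp.le
  set u := fun t : ℝ => sq * t - sp / t with hu
  -- derivative
  have hderiv : ∀ t ∈ Set.Ioi (0:ℝ), HasDerivWithinAt u (sq + sp/t^2) (Set.Ioi 0) t := by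
    intro t ht
    have htne : t ≠ 0 := (mem_Ioi.mp ht).ne'
    have h1 : HasDerivAt (fun t : ℝ => sq * t) sq t := by
      simpa using (hasDerivAt_id t).const_mul sq
    have h2 : HasDerivAt (fun t : ℝ => sp / t) (- (sp / t^2)) t := by
      have := (hasDerivAt_inv htne).const_mul sp
      simpa [div_eq_mul_inv, neg_div, mul_div_assoc] using this
    have := h1.sub h2
    have h3 := this.hasDerivWithinAt (s := Set.Ioi 0)
    rw [sub_neg_eq_add] at h3
    exact h3
  -- injectivity
  have hinj : Set.InjOn u (Set.Ioi 0) := by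
    apply StrictMonoOn.injOn
    intro x hx y hy hxy
    simp only [hu]
    have hx0 : (0:ℝ) < x := hx
    have hy0 : (0:ℝ) < y := hy
    have : sp / y < sp / x := by
      apply div_lt_div_of_pos_left hsp hx0 hxy
    nlinarith [mul_lt_mul_of_pos_left hxy hsq]
  -- claim A via image substitution
  have himg : u '' Set.Ioi 0 = Set.univ := image_u sq sp hsq hsp
  have hA : ∫ t in Set.Ioi (0:ℝ), (sq + sp/t^2) * Real.exp (-(u t)^2) = Real.sqrt π := by
    have := integral_image_eq_integral_abs_deriv_smul measurableSet_Ioi hderiv hinj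
      (fun x => Real.exp (-x^2))
    rw [himg] at this
    have hL : ∫ x, Real.exp (-x^2) = Real.sqrt π := by
      have := integral_gaussian 1
      simpa using this
    rw [Measure.restrict_univ] at this
    rw [← hL, this]
    apply setIntegral_congr_fun measurableSet_Ioi
    intro t ht
    have : |sq + sp/t^2| = sq + sp/t^2 := by
      apply abs_of_pos; have := mem_Ioi.mp ht; positivity
    simp [this, smul_eq_mul]
  -- claim B: substitution t ↦ c/t with c = sp/sq
  set c := sp/sq with hc
  have hcpos : 0 < c := div_pos hsp hsq
  have hg_deriv : ∀ t ∈ Set.Ioi (0:ℝ),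
      HasDerivWithinAt (fun r : ℝ => c / r) (-(c/t^2)) (Set.Ioi 0) t := by
    intro t ht
    have htne : t ≠ 0 := (mem_Ioi.mp ht).ne'
    have := (hasDerivAt_inv htne).const_mul c
    have h' : HasDerivAt (fun r : ℝ => c / r) (-(c/t^2)) t := by
      simpa [div_eq_mul_inv, neg_div, mul_div_assoc] using this
    exact h'.hasDerivWithinAt
  have hg_inj : Set.InjOn (fun r : ℝ => c / r) (Set.Ioi 0) := by
    intro x hx y hy hxy
    have hx0 : (0:ℝ) < x := hx
    have hy0 : (0:ℝ) < y := hy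
    have h : c / x = c / y := hxy
    rw [div_eq_div_iff hx0.ne' hy0.ne'] at h
    exact (mul_left_cancel₀ hcpos.ne' h).symm
  have hg_img : (fun r : ℝ => c / r) '' Set.Ioi 0 = Set.Ioi 0 := by
    ext y
    simp only [mem_image, mem_Ioi]
    constructor
    · rintro ⟨x, hx, rfl⟩; positivity
    · intro hy; exact ⟨c/y, by positivity, by field_simp⟩
  -- u (c/r) = - u r
  have huc : ∀ r : ℝ, 0 < r → u (c/r) = - u r := by
    intro r hr
    simp only [hu, hc]
    field_simp
    ring
  have hB : ∫ t in Set.Ioi (0:ℝ), (sp/t^2) * Real.exp (-(u t)^2)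
      = ∫ t in Set.Ioi (0:ℝ), sq * Real.exp (-(u t)^2) := by
    have := integral_image_eq_integral_abs_deriv_smul measurableSet_Ioi hg_deriv hg_inj
      (fun x => (sp/x^2) * Real.exp (-(u x)^2))
    rw [hg_img] at this
    rw [this]
    apply setIntegral_congr_fun measurableSet_Ioi
    intro t ht
    have ht0 : (0:ℝ) < t := ht
    have habs : |(-(c/t^2))| = c/t^2 := by rw [abs_neg]; apply abs_of_pos; positivity
    have hct : (0:ℝ) < c/t := by positivity
    simp only [habs, smul_eq_mul, huc t ht0, neg_sq]
    rw [show sp/(c/t)^2 = sq * t^2 / c by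
      rw [div_pow]; rw [div_div_eq_mul_div]
      rw [hc]; field_simp]
    field_simp
  -- integrability of sq * exp(-(u t)^2) on Ioi 0
  have hkey : ∀ t : ℝ, 0 < t → (u t)^2 = q*t^2 + p/t^2 - 2*sp*sq := by
    intro t ht
    have htne : t ≠ 0 := ht.ne'
    simp only [hu]
    field_simp
    ring_nf
    linear_combination (t^2*t^2)*hq2 + hp2
  have hexp_eq : ∀ t : ℝ, 0 < t →
      Real.exp (-(u t)^2) = Real.exp (2*sp*sq) * Real.exp (-(q*t^2) - p/t^2) := by
    intro t ht
    rw [← Real.exp_add, hkey t ht]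
    ring_nf
  have hint1 : IntegrableOn (fun t => sq * Real.exp (-(u t)^2)) (Set.Ioi 0) := by
    apply Integrable.mono' ((integrable_exp_neg_mul_sq hq).const_mul
      (sq * Real.exp (2*sp*sq))).integrableOn
    · apply Measurable.aestronglyMeasurable
      apply Measurable.const_mul
      apply (Real.measurable_exp.comp _)
      apply Measurable.neg
      apply Measurable.pow_const
      fun_prop
    · filter_upwards [ae_restrict_mem measurableSet_Ioi] with t ht
      have ht0 : (0:ℝ) < t := ht
      rw [Real.norm_eq_abs, abs_of_pos (by positivity), hexp_eq t ht0]
      have hle : Real.exp (-(q*t^2) - p/t^2) ≤ Real.exp (-q * t^2) := by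
        apply Real.exp_le_exp.mpr
        have : 0 < p/t^2 := by positivity
        linarith
      calc sq * (Real.exp (2*sp*sq) * Real.exp (-(q*t^2) - p/t^2))
          = sq * Real.exp (2*sp*sq) * Real.exp (-(q*t^2) - p/t^2) := by ring
        _ ≤ sq * Real.exp (2*sp*sq) * Real.exp (-q * t^2) := by
            apply mul_le_mul_of_nonneg_left hle; positivity
  have hint2 : IntegrableOn (fun t => (sp/t^2) * Real.exp (-(u t)^2)) (Set.Ioi 0) := by
    have hiff := integrableOn_image_iff_integrableOn_abs_deriv_smul measurableSet_Ioi
      hg_deriv hg_inj (fun x => (sp/x^2) * Real.exp (-(u x)^2))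
    rw [hg_img] at hiff
    rw [hiff]
    apply (integrableOn_congr_fun _ measurableSet_Ioi).mpr hint1
    intro t ht
    have ht0 : (0:ℝ) < t := ht
    have habs : |(-(c/t^2))| = c/t^2 := by rw [abs_neg]; apply abs_of_pos; positivity
    have hct : (0:ℝ) < c/t := by positivity
    simp only [habs, smul_eq_mul, huc t ht0, neg_sq]
    rw [show sp/(c/t)^2 = sq * t^2 / c by
      rw [div_pow]; rw [div_div_eq_mul_div]
      rw [hc]; field_simp]
    field_simp
  -- combine
  have hsplit : ∫ t in Set.Ioi (0:ℝ), (sq + sp/t^2) * Real.exp (-(u t)^2)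
      = (∫ t in Set.Ioi (0:ℝ), sq * Real.exp (-(u t)^2))
        + ∫ t in Set.Ioi (0:ℝ), (sp/t^2) * Real.exp (-(u t)^2) := by
    rw [← integral_add hint1 hint2]
    apply setIntegral_congr_fun measurableSet_Ioi
    intro t ht
    ring
  have hJ : ∫ t in Set.Ioi (0:ℝ), Real.exp (-(u t)^2) = Real.sqrt π / (2*sq) := by
    have h2J : 2 * (sq * ∫ t in Set.Ioi (0:ℝ), Real.exp (-(u t)^2)) = Real.sqrt π := by
      rw [← hA, hsplit, hB, ← integral_const_mul]
      ring
    field_simp at h2J ⊢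
    linarith
  -- finish
  have : ∫ t in Set.Ioi (0:ℝ), Real.exp (-(q*t^2) - p/t^2)
      = Real.exp (-(2*sp*sq)) * ∫ t in Set.Ioi (0:ℝ), Real.exp (-(u t)^2) := by
    rw [← integral_const_mul]
    apply setIntegral_congr_fun measurableSet_Ioi
    intro t ht
    have ht0 : (0:ℝ) < t := ht
    simp only
    rw [hexp_eq t ht0, ← mul_assoc, ← Real.exp_add]
    simp
  rw [this, hJ]
  have hsqrtpq : Real.sqrt (p*q) = sp*sq := by rw [Real.sqrt_mul hp.le]
  have hsqrtpiq : Real.sqrt (π/q) = Real.sqrt π / sq := by rw [Real.sqrt_div Real.pi_pos.le]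
  rw [hsqrtpq, hsqrtpiq]
  ring

lemma glasser' {p q : ℝ} (hp : 0 ≤ p) (hq : 0 < q) :
    ∫ t in Set.Ioi (0:ℝ), Real.exp (-(q*t^2) - p/t^2)
      = Real.sqrt (π/q)/2 * Real.exp (-(2*Real.sqrt (p*q))) := by
  rcases eq_or_lt_of_le hp with h|h
  · subst h
    simp only [zero_div, sub_zero, zero_mul, Real.sqrt_zero, mul_zero, neg_zero,
      Real.exp_zero, mul_one]
    rw [← integral_gaussian_Ioi q]
    apply setIntegral_congr_fun measurableSet_Ioi
    intro t ht
    ring_nf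
  · exact glasser h hq

/-- Scale mixture of normals representation of the Laplace density:
(a/2)·exp(−a|z|) = ∫_0^∞ (2πs)^{−1/2} exp(−z²/(2s)) · (a²/2)exp(−a²s/2) ds. -/
theorem laplace_scale_mixture_of_normals
    (a : ℝ) (ha : 0 < a) (z : ℝ) :
    (a/2) * Real.exp (-a * |z|)
      = ∫ s in Set.Ioi (0:ℝ),
          (2 * Real.pi * s) ^ (-(1:ℝ)/2) * Real.exp (-z^2/(2*s))
            * ((a^2/2) * Real.exp (-a^2 * s / 2)) := by
  set F : ℝ → ℝ := fun s => (2 * Real.pi * s) ^ (-(1:ℝ)/2) * Real.exp (-z^2/(2*s))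
            * ((a^2/2) * Real.exp (-a^2 * s / 2)) with hF
  have hsub := integral_comp_rpow_Ioi_of_pos (g := F) (p := 2) two_pos
  rw [← hsub]
  have h2pi : (0:ℝ) < 2 * π := by positivity
  set S := Real.sqrt (2*π) with hS
  have hSpos : 0 < S := Real.sqrt_pos.mpr h2pi
  have hpow : (2*π) ^ (-(1:ℝ)/2) = S⁻¹ := by
    rw [show (-(1:ℝ)/2) = -(1/2:ℝ) by norm_num, Real.rpow_neg h2pi.le, hS,
      Real.sqrt_eq_rpow]
  have hcongr : ∫ t in Set.Ioi (0:ℝ), ((2:ℝ) * t ^ ((2:ℝ)-1)) • F (t ^ (2:ℝ))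
      = ∫ t in Set.Ioi (0:ℝ), (S⁻¹ * a^2) * Real.exp (-((a^2/2)*t^2) - (z^2/2)/t^2) := by
    apply setIntegral_congr_fun measurableSet_Ioi
    intro t ht
    have ht0 : (0:ℝ) < t := ht
    have h1 : t ^ ((2:ℝ)-1) = t := by norm_num
    have h2 : t ^ ((2:ℝ)) = t^2 := by
      rw [show ((2:ℝ)) = ((2:ℕ):ℝ) by norm_num, Real.rpow_natCast]
    have h3 : (2 * π * t^2) ^ (-(1:ℝ)/2) = S⁻¹ * t⁻¹ := by
      rw [Real.mul_rpow h2pi.le (sq_nonneg t), hpow]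
      congr 1
      rw [← Real.rpow_natCast t 2, ← Real.rpow_mul ht0.le]
      norm_num
      exact Real.rpow_neg_one t
    simp only [hF, smul_eq_mul, h1, h2, h3]
    have hexp : Real.exp (-((a^2/2)*t^2) - (z^2/2)/t^2)
        = Real.exp (-a^2*t^2/2) * Real.exp (-z^2/(2*t^2)) := by
      rw [← Real.exp_add]; ring_nf
    rw [hexp]
    have htne : t ≠ 0 := ht0.ne'
    field_simp
  rw [hcongr, integral_const_mul, glasser' (by positivity) (by positivity : (0:ℝ) < a^2/2)]
  have e1 : Real.sqrt (π/(a^2/2)) = S / a := by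
    rw [show π/(a^2/2) = 2*π/a^2 by field_simp, Real.sqrt_div h2pi.le, hS,
      Real.sqrt_sq ha.le]
  have e2 : Real.sqrt ((z^2/2) * (a^2/2)) = |z| * a / 2 := by
    rw [show (z^2/2) * (a^2/2) = (|z| * a / 2)^2 by
      rw [show (|z| * a / 2)^2 = |z|^2 * a^2 / 4 by ring, sq_abs]; ring]
    exact Real.sqrt_sq (by positivity)
  rw [e1, e2]
  rw [show -(2 * (|z| * a / 2)) = -a * |z| by ring]
  field_simp
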